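/- Let p ≥ 2 and let Q_sh = {z ∈ {0,1}^p : z_p ≤ z_i for all i ∈ [p−1]}. Then conv(Q_sh \ {0}) = {z ∈ [0,1]^p : ∑_{i=1}^{p−1} z_i − (p−2)·z_p ≥ 1 and z_p ≤ z_i for all i ∈ [p−1]}. -/

import Mathlib

open Finset Set

set_option maxHeartbeats 2000000

private lemma st10_not_extreme {n : ℕ} {z d : Fin n → ℝ} {s : Set (Fin n → ℝ)} {ε : ℝ}
    (hε : 0 < ε) (hkey : ∀ r : ℝ, -ε ≤ r → r ≤ ε → z + r • d ∈ s)
    (i : Fin n) (hdi : d i ≠ 0) : z ∉ s.extremePoints ℝ := by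
  intro hz
  have h1 : z + ε • d ∈ s := hkey ε (by linarith) le_rfl
  have h2 : z + (-ε) • d ∈ s := hkey (-ε) le_rfl (by linarith)
  have hseg : z ∈ openSegment ℝ (z + (-ε) • d) (z + ε • d) :=
    ⟨1/2, 1/2, by norm_num, by norm_num, by norm_num, by module⟩
  have h := hz.2 h2 h1 hseg
  have h' := congrFun h i
  simp only [Pi.add_apply, Pi.smul_apply, smul_eq_mul, neg_mul] at h'
  have : ε * d i = 0 := by linarith
  rcases mul_eq_zero.1 this with h | h
  · exact absurd h (by linarith)
  · exact hdi h

private lemma st10_extreme_binary {p : ℕ} (hp : 2 ≤ p) (L : Fin p) {z : Fin p → ℝ}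
    (hz : z ∈ Set.extremePoints ℝ {z : Fin p → ℝ |
        (∀ i, z i ∈ Set.Icc (0 : ℝ) 1) ∧
        1 ≤ (∑ i ∈ Finset.univ.erase L, z i) - ((p : ℝ) - 2) * z L ∧
        ∀ i, i ≠ L → z L ≤ z i}) :
    ∀ i, z i = 0 ∨ z i = 1 := by
  classical
  obtain ⟨hIcc, hg, hh⟩ := hz.1
  set E := Finset.univ.erase L with hEdef
  have hLE : L ∉ E := Finset.notMem_erase _ _
  have hmemE : ∀ i : Fin p, i ≠ L → i ∈ E := fun i hi => Finset.mem_erase.2 ⟨hi, Finset.mem_univ i⟩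
  have hEcard : E.card = p - 1 := by
    rw [hEdef, Finset.card_erase_of_mem (Finset.mem_univ L), Finset.card_univ, Fintype.card_fin]
  have hEcardR : (E.card : ℝ) = (p : ℝ) - 1 := by
    rw [hEcard, Nat.cast_sub (by omega : 1 ≤ p), Nat.cast_one]
  by_contra hcon
  push_neg at hcon
  obtain ⟨i0, hi00, hi01⟩ := hcon
  have h0 : 0 < z i0 := lt_of_le_of_ne (hIcc i0).1 (Ne.symm hi00)
  have h1 : z i0 < 1 := lt_of_le_of_ne (hIcc i0).2 hi01
  have hle : ∀ i, z L ≤ z i := by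
    intro i
    by_cases hiL : i = L
    · rw [hiL]
    · exact hh i hiL
  have htlt1 : z L < 1 := lt_of_le_of_lt (hle i0) h1
  have ht0le : 0 ≤ z L := (hIcc L).1
  have hsum : ∀ (d : Fin p → ℝ) (r : ℝ),
      (∑ i ∈ E, (z i + r * d i)) = (∑ i ∈ E, z i) + r * ∑ i ∈ E, d i := by
    intro d r
    rw [Finset.sum_add_distrib, ← Finset.mul_sum]
  by_cases ht0 : z L = 0
  · -- Branch I : z L = 0
    have hi0L : i0 ≠ L := fun h => hi00 (by rw [h, ht0])
    have hi0E : i0 ∈ E := hmemE i0 hi0L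
    by_cases hgt : 1 < (∑ i ∈ E, z i) - ((p:ℝ) - 2) * z L
    · -- I.b : slack in g, perturb e_{i0}
      refine absurd hz (st10_not_extreme (d := fun j => if j = i0 then 1 else 0)
        (ε := min (min (z i0) (1 - z i0)) ((∑ i ∈ E, z i) - ((p:ℝ)-2) * z L - 1))
        (lt_min (lt_min h0 (by linarith)) (by linarith)) ?_ i0 (by simp))
      set d : Fin p → ℝ := fun j => if j = i0 then 1 else 0 with hd
      set ε := min (min (z i0) (1 - z i0)) ((∑ i ∈ E, z i) - ((p:ℝ)-2) * z L - 1) with hεdef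
      have hε1 : ε ≤ z i0 := le_trans (min_le_left _ _) (min_le_left _ _)
      have hε2 : ε ≤ 1 - z i0 := le_trans (min_le_left _ _) (min_le_right _ _)
      have hε3 : ε ≤ (∑ i ∈ E, z i) - ((p:ℝ)-2) * z L - 1 := min_le_right _ _
      have hdL : d L = 0 := if_neg (Ne.symm hi0L)
      have hsd : ∑ i ∈ E, d i = 1 := by
        rw [hd, Finset.sum_ite_eq' E i0 (fun _ => (1:ℝ)), if_pos hi0E]
      intro r hr1 hr2
      refine ⟨fun i => ?_, ?_, fun i hiL => ?_⟩
      · show z i + r * d i ∈ Set.Icc (0:ℝ) 1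
        rw [Set.mem_Icc, hd]
        show 0 ≤ z i + r * (if i = i0 then 1 else 0) ∧ z i + r * (if i = i0 then 1 else 0) ≤ 1
        by_cases hii : i = i0
        · rw [if_pos hii, hii, mul_one]
          constructor <;> linarith
        · rw [if_neg hii, mul_zero, add_zero]
          exact ⟨(hIcc i).1, (hIcc i).2⟩
      · show 1 ≤ (∑ i ∈ E, (z i + r * d i)) - ((p:ℝ) - 2) * (z L + r * d L)
        rw [hsum, hsd, hdL]
        have h4 : (∑ i ∈ E, z i) + r * 1 - ((p:ℝ)-2) * (z L + r * 0) =
            ((∑ i ∈ E, z i) - ((p:ℝ)-2) * z L) + r := by ring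
        rw [h4]
        linarith
      · show z L + r * d L ≤ z i + r * d i
        rw [hdL, hd]
        show z L + r * 0 ≤ z i + r * (if i = i0 then 1 else 0)
        rw [mul_zero, add_zero]
        by_cases hii : i = i0
        · rw [if_pos hii, hii, mul_one]
          linarith [hle i0]
        · rw [if_neg hii, mul_zero, add_zero]
          exact hh i hiL
    · have hg1 : (∑ i ∈ E, z i) - ((p:ℝ) - 2) * z L = 1 := le_antisymm (not_lt.1 hgt) hg
      have hsum1 : (∑ i ∈ E, z i) = 1 := by
        rw [ht0, mul_zero, sub_zero] at hg1
        exact hg1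
      by_cases hsec : ∃ j, j ≠ i0 ∧ j ≠ L ∧ 0 < z j ∧ z j < 1
      · -- I.a : two fractional coordinates, perturb e_{i0} - e_{j1}
        obtain ⟨j1, hji0, hjL, hj0, hj1⟩ := hsec
        have hj1E : j1 ∈ E := hmemE j1 hjL
        refine absurd hz (st10_not_extreme
          (d := fun j => if j = i0 then 1 else if j = j1 then -1 else 0)
          (ε := min (min (z i0) (1 - z i0)) (min (z j1) (1 - z j1)))
          (lt_min (lt_min h0 (by linarith)) (lt_min hj0 (by linarith)))
          ?_ i0 (by simp))
        set d : Fin p → ℝ := fun j => if j = i0 then 1 else if j = j1 then -1 else 0 with hd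
        set ε := min (min (z i0) (1 - z i0)) (min (z j1) (1 - z j1)) with hεdef
        have hε1 : ε ≤ z i0 := le_trans (min_le_left _ _) (min_le_left _ _)
        have hε2 : ε ≤ 1 - z i0 := le_trans (min_le_left _ _) (min_le_right _ _)
        have hε3 : ε ≤ z j1 := le_trans (min_le_right _ _) (min_le_left _ _)
        have hε4 : ε ≤ 1 - z j1 := le_trans (min_le_right _ _) (min_le_right _ _)
        have hdL : d L = 0 := by
          show (if L = i0 then (1:ℝ) else if L = j1 then -1 else 0) = 0
          rw [if_neg (Ne.symm hi0L), if_neg (Ne.symm hjL)]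
        have hdeq : ∀ j, d j = (if j = i0 then (1:ℝ) else 0) + (if j = j1 then (-1:ℝ) else 0) := by
          intro j
          show (if j = i0 then (1:ℝ) else if j = j1 then -1 else 0) = _
          by_cases h1 : j = i0
          · rw [if_pos h1, if_pos h1, if_neg (by rw [h1]; exact fun h => hji0 h.symm), add_zero]
          · rw [if_neg h1, if_neg h1, zero_add]
        have hsd : ∑ i ∈ E, d i = 0 := by
          rw [Finset.sum_congr rfl (fun j _ => hdeq j), Finset.sum_add_distrib,
            Finset.sum_ite_eq' E i0 (fun _ => (1:ℝ)), Finset.sum_ite_eq' E j1 (fun _ => (-1:ℝ)),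
            if_pos hi0E, if_pos hj1E]
          ring
        intro r hr1 hr2
        refine ⟨fun i => ?_, ?_, fun i hiL => ?_⟩
        · show z i + r * d i ∈ Set.Icc (0:ℝ) 1
          rw [Set.mem_Icc, hd]
          show 0 ≤ z i + r * (if i = i0 then 1 else if i = j1 then -1 else 0) ∧
            z i + r * (if i = i0 then 1 else if i = j1 then -1 else 0) ≤ 1
          by_cases h1 : i = i0
          · rw [if_pos h1, h1, mul_one]
            constructor <;> linarith
          · rw [if_neg h1]
            by_cases h2 : i = j1
            · rw [if_pos h2, h2]
              constructor <;> nlinarith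
            · rw [if_neg h2, mul_zero, add_zero]
              exact ⟨(hIcc i).1, (hIcc i).2⟩
        · show 1 ≤ (∑ i ∈ E, (z i + r * d i)) - ((p:ℝ) - 2) * (z L + r * d L)
          rw [hsum, hsd, hdL, mul_zero, add_zero, add_zero]
          exact hg
        · show z L + r * d L ≤ z i + r * d i
          rw [hdL, mul_zero, add_zero, hd, ht0]
          show (0:ℝ) ≤ z i + r * (if i = i0 then 1 else if i = j1 then -1 else 0)
          by_cases h1 : i = i0
          · rw [if_pos h1, h1, mul_one]
            linarith
          · rw [if_neg h1]
            by_cases h2 : i = j1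
            · rw [if_pos h2, h2]
              nlinarith
            · rw [if_neg h2, mul_zero, add_zero]
              exact (hIcc i).1
      · -- I.c : counting contradiction
        push_neg at hsec
        by_cases hone : ∃ j ∈ E, j ≠ i0 ∧ z j = 1
        · obtain ⟨j, hjE, hji0, hj1⟩ := hone
          have hpair : ({i0, j} : Finset (Fin p)) ⊆ E := by
            intro x hx
            rcases Finset.mem_insert.1 hx with rfl | hx
            · exact hi0E
            · rw [Finset.mem_singleton.1 hx]
              exact hjE
          have hps : ∑ i ∈ ({i0, j} : Finset (Fin p)), z i = z i0 + z j :=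
            Finset.sum_pair (fun h => hji0 h.symm)
          have hle2 : ∑ i ∈ ({i0, j} : Finset (Fin p)), z i ≤ ∑ i ∈ E, z i :=
            Finset.sum_le_sum_of_subset_of_nonneg hpair (fun i _ _ => (hIcc i).1)
          rw [hps, hsum1, hj1] at hle2
          linarith
        · push_neg at hone
          have hzero : ∀ j ∈ E, j ≠ i0 → z j = 0 := by
            intro j hjE hji0
            have hjL : j ≠ L := (Finset.mem_erase.1 hjE).1
            by_contra hj0
            have hj0' : 0 < z j := lt_of_le_of_ne (hIcc j).1 (Ne.symm hj0)
            exact hone j hjE hji0 (le_antisymm (hIcc j).2 (hsec j hji0 hjL hj0'))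
          have : ∑ i ∈ E, z i = z i0 :=
            Finset.sum_eq_single i0 (fun j hj hne => hzero j hj hne) (fun h => absurd hi0E h)
          rw [hsum1] at this
          linarith
  · -- Branch II : 0 < z L < 1
    have htpos : 0 < z L := lt_of_le_of_ne ht0le (Ne.symm ht0)
    by_cases ha : ∃ i ∈ E, z L < z i ∧ z i < 1
    · obtain ⟨i1, hi1E, hi1t, hi1lt⟩ := ha
      have hi1L : i1 ≠ L := (Finset.mem_erase.1 hi1E).1
      have hi1ne : z i1 ≠ z L := ne_of_gt hi1t
      by_cases hb : ∃ j ∈ E, j ≠ i1 ∧ z L < z j ∧ z j < 1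
      · -- II.a : two strictly-between coordinates
        obtain ⟨j1, hj1E, hji1, hj1t, hj1lt⟩ := hb
        have hj1L : j1 ≠ L := (Finset.mem_erase.1 hj1E).1
        refine absurd hz (st10_not_extreme
          (d := fun j => if j = i1 then 1 else if j = j1 then -1 else 0)
          (ε := min (min (z i1 - z L) (1 - z i1)) (min (z j1 - z L) (1 - z j1)))
          (lt_min (lt_min (by linarith) (by linarith)) (lt_min (by linarith) (by linarith)))
          ?_ i1 (by simp))
        set d : Fin p → ℝ := fun j => if j = i1 then 1 else if j = j1 then -1 else 0 with hd
        set ε := min (min (z i1 - z L) (1 - z i1)) (min (z j1 - z L) (1 - z j1)) with hεdef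
        have hε1 : ε ≤ z i1 - z L := le_trans (min_le_left _ _) (min_le_left _ _)
        have hε2 : ε ≤ 1 - z i1 := le_trans (min_le_left _ _) (min_le_right _ _)
        have hε3 : ε ≤ z j1 - z L := le_trans (min_le_right _ _) (min_le_left _ _)
        have hε4 : ε ≤ 1 - z j1 := le_trans (min_le_right _ _) (min_le_right _ _)
        have hdL : d L = 0 := by
          show (if L = i1 then (1:ℝ) else if L = j1 then -1 else 0) = 0
          rw [if_neg (Ne.symm hi1L), if_neg (Ne.symm hj1L)]
        have hdeq : ∀ j, d j = (if j = i1 then (1:ℝ) else 0) + (if j = j1 then (-1:ℝ) else 0) := by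
          intro j
          show (if j = i1 then (1:ℝ) else if j = j1 then -1 else 0) = _
          by_cases h1 : j = i1
          · rw [if_pos h1, if_pos h1, if_neg (by rw [h1]; exact fun h => hji1 h.symm), add_zero]
          · rw [if_neg h1, if_neg h1, zero_add]
        have hsd : ∑ i ∈ E, d i = 0 := by
          rw [Finset.sum_congr rfl (fun j _ => hdeq j), Finset.sum_add_distrib,
            Finset.sum_ite_eq' E i1 (fun _ => (1:ℝ)), Finset.sum_ite_eq' E j1 (fun _ => (-1:ℝ)),
            if_pos hi1E, if_pos hj1E]
          ring
        intro r hr1 hr2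
        refine ⟨fun i => ?_, ?_, fun i hiL => ?_⟩
        · show z i + r * d i ∈ Set.Icc (0:ℝ) 1
          rw [Set.mem_Icc, hd]
          show 0 ≤ z i + r * (if i = i1 then 1 else if i = j1 then -1 else 0) ∧
            z i + r * (if i = i1 then 1 else if i = j1 then -1 else 0) ≤ 1
          by_cases h1 : i = i1
          · rw [if_pos h1, h1, mul_one]
            constructor <;> linarith
          · rw [if_neg h1]
            by_cases h2 : i = j1
            · rw [if_pos h2, h2]
              constructor <;> nlinarith
            · rw [if_neg h2, mul_zero, add_zero]
              exact ⟨(hIcc i).1, (hIcc i).2⟩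
        · show 1 ≤ (∑ i ∈ E, (z i + r * d i)) - ((p:ℝ) - 2) * (z L + r * d L)
          rw [hsum, hsd, hdL, mul_zero, add_zero, add_zero]
          exact hg
        · show z L + r * d L ≤ z i + r * d i
          rw [hdL, mul_zero, add_zero, hd]
          show z L ≤ z i + r * (if i = i1 then 1 else if i = j1 then -1 else 0)
          by_cases h1 : i = i1
          · rw [if_pos h1, h1, mul_one]
            linarith
          · rw [if_neg h1]
            by_cases h2 : i = j1
            · rw [if_pos h2, h2]
              nlinarith
            · rw [if_neg h2, mul_zero, add_zero]
              exact hle i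
      · -- II.b : unique strictly-between coordinate
        push_neg at hb
        have hval : ∀ i ∈ E, i ≠ i1 → z i ≠ z L → z i = 1 := by
          intro i hiE hii1 hit
          exact le_antisymm (hIcc i).2 (hb i hiE hii1 (lt_of_le_of_ne (hle i) (Ne.symm hit)))
        set T := E.filter (fun j => z j = z L) with hT
        set k := T.card with hk
        have hkle : (k : ℝ) ≤ (p : ℝ) - 2 := by
          have hsub : T ⊆ E.erase i1 := by
            intro x hx
            obtain ⟨hxE, hxt⟩ := Finset.mem_filter.1 hx
            exact Finset.mem_erase.2 ⟨fun h => hi1ne (h ▸ hxt), hxE⟩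
          have h5 : k ≤ (E.erase i1).card := Finset.card_le_card hsub
          have h6 : (E.erase i1).card = p - 2 := by
            rw [Finset.card_erase_of_mem hi1E, hEcard]
            omega
          have h7 : k ≤ p - 2 := h6 ▸ h5
          have h8 : ((p - 2 : ℕ) : ℝ) = (p : ℝ) - 2 := by
            rw [Nat.cast_sub hp]
            norm_num
          calc (k : ℝ) ≤ ((p - 2 : ℕ) : ℝ) := Nat.cast_le.2 h7
            _ = (p : ℝ) - 2 := h8
        set c := (p : ℝ) - 2 - k with hc
        have hc0 : 0 ≤ c := by rw [hc]; linarith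
        have h1c : (0:ℝ) < 1 + c := by linarith
        refine absurd hz (st10_not_extreme
          (d := fun j => if z j = z L then 1 else if j = i1 then c else 0)
          (ε := min (min (z L) (1 - z L)) (min ((z i1 - z L)/(1+c)) ((1 - z i1)/(1+c))))
          (lt_min (lt_min htpos (by linarith)) (lt_min (div_pos (by linarith) h1c)
            (div_pos (by linarith) h1c)))
          ?_ L (by simp))
        set d : Fin p → ℝ := fun j => if z j = z L then 1 else if j = i1 then c else 0 with hd
        set ε := min (min (z L) (1 - z L)) (min ((z i1 - z L)/(1+c)) ((1 - z i1)/(1+c))) with hεdef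
        have hε1 : ε ≤ z L := le_trans (min_le_left _ _) (min_le_left _ _)
        have hε2 : ε ≤ 1 - z L := le_trans (min_le_left _ _) (min_le_right _ _)
        have hεc1 : ε * (1+c) ≤ z i1 - z L :=
          (le_div_iff₀ h1c).1 (le_trans (min_le_right _ _) (min_le_left _ _))
        have hεc2 : ε * (1+c) ≤ 1 - z i1 :=
          (le_div_iff₀ h1c).1 (le_trans (min_le_right _ _) (min_le_right _ _))
        have hεpos : 0 < ε := lt_min (lt_min htpos (by linarith)) (lt_min (div_pos (by linarith) h1c)
            (div_pos (by linarith) h1c))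
        have hdL : d L = 1 := if_pos rfl
        have hsd : ∑ i ∈ E, d i = (k : ℝ) + c := by
          rw [hd, ← Finset.sum_filter_add_sum_filter_not E (fun j => z j = z L)]
          have e1 : ∑ i ∈ E.filter (fun j => z j = z L),
              (if z i = z L then (1:ℝ) else if i = i1 then c else 0) = (k : ℝ) := by
            rw [Finset.sum_congr rfl (fun i hi => if_pos (Finset.mem_filter.1 hi).2),
              Finset.sum_const, nsmul_eq_mul, mul_one, hk, hT]
          have e2 : ∑ i ∈ E.filter (fun j => ¬ z j = z L),
              (if z i = z L then (1:ℝ) else if i = i1 then c else 0) = c := by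
            rw [Finset.sum_congr rfl (fun i hi => if_neg (Finset.mem_filter.1 hi).2)]
            rw [Finset.sum_ite_eq' _ i1 (fun _ => c),
              if_pos (Finset.mem_filter.2 ⟨hi1E, hi1ne⟩)]
          rw [e1, e2]
        intro r hr1 hr2
        have hrc1 : r * c ≤ ε * (1 + c) := by
          nlinarith [mul_nonneg (show (0:ℝ) ≤ ε - r by linarith) hc0, hεpos.le]
        have hrc2 : -(ε * (1+c)) ≤ r * c := by
          nlinarith [mul_nonneg (show (0:ℝ) ≤ r + ε by linarith) hc0, hεpos.le]
        refine ⟨fun i => ?_, ?_, fun i hiL => ?_⟩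
        · show z i + r * d i ∈ Set.Icc (0:ℝ) 1
          rw [Set.mem_Icc, hd]
          show 0 ≤ z i + r * (if z i = z L then 1 else if i = i1 then c else 0) ∧
            z i + r * (if z i = z L then 1 else if i = i1 then c else 0) ≤ 1
          by_cases h1 : z i = z L
          · rw [if_pos h1, h1, mul_one]
            constructor <;> linarith
          · rw [if_neg h1]
            by_cases h2 : i = i1
            · rw [if_pos h2, h2]
              constructor <;> nlinarith
            · rw [if_neg h2, mul_zero, add_zero]
              exact ⟨(hIcc i).1, (hIcc i).2⟩
        · show 1 ≤ (∑ i ∈ E, (z i + r * d i)) - ((p:ℝ) - 2) * (z L + r * d L)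
          rw [hsum, hsd, hdL, mul_one]
          have hkc : r * ((k:ℝ) + c) = r * ((p:ℝ) - 2) := by rw [hc]; ring
          nlinarith [hkc]
        · show z L + r * d L ≤ z i + r * d i
          rw [hdL, mul_one, hd]
          show z L + r ≤ z i + r * (if z i = z L then 1 else if i = i1 then c else 0)
          by_cases h1 : z i = z L
          · rw [if_pos h1, h1, mul_one]
          · rw [if_neg h1]
            by_cases h2 : i = i1
            · rw [if_pos h2, h2]
              nlinarith
            · rw [if_neg h2, mul_zero, add_zero]
              have : z i = 1 := hval i (hmemE i hiL) h2 h1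
              linarith
    · -- II.c : no strictly-between coordinate
      push_neg at ha
      have hval : ∀ i ∈ E, z i ≠ z L → z i = 1 := by
        intro i hiE hit
        exact le_antisymm (hIcc i).2 (ha i hiE (lt_of_le_of_ne (hle i) (Ne.symm hit)))
      set T := E.filter (fun j => z j = z L) with hT
      set k := T.card with hk
      have hsplitz : ∑ i ∈ E, z i = (k:ℝ) * z L + (((p:ℝ) - 1) - k) := by
        rw [← Finset.sum_filter_add_sum_filter_not E (fun j => z j = z L)]
        have e1 : ∑ i ∈ E.filter (fun j => z j = z L), z i = (k : ℝ) * z L := by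
          rw [Finset.sum_congr rfl (fun i hi => (Finset.mem_filter.1 hi).2),
            Finset.sum_const, nsmul_eq_mul, hk, hT]
        have e2 : ∑ i ∈ E.filter (fun j => ¬ z j = z L), z i
            = ((E.filter (fun j => ¬ z j = z L)).card : ℝ) := by
          rw [Finset.sum_congr rfl (fun i hi => hval i (Finset.mem_filter.1 hi).1
            (Finset.mem_filter.1 hi).2), Finset.sum_const, nsmul_eq_mul, mul_one]
        have e3 : ((E.filter (fun j => ¬ z j = z L)).card : ℝ) = ((p:ℝ) - 1) - k := by
          have := Finset.card_filter_add_card_filter_not (s := E)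
            (p := fun j => z j = z L)
          have h9 := congrArg (fun n : ℕ => (n : ℝ)) this
          push_cast at h9
          rw [hEcardR] at h9
          rw [← hT, ← hk] at h9
          linarith
        rw [e1, e2, e3]
      have hc0 : (0:ℝ) ≤ (p:ℝ) - 2 - k := by
        by_contra hcc
        push_neg at hcc
        nlinarith [mul_pos (show (0:ℝ) < (k:ℝ) - ((p:ℝ)-2) by linarith)
          (show (0:ℝ) < 1 - z L by linarith)]
      refine absurd hz (st10_not_extreme
        (d := fun j => if z j = z L then 1 else 0)
        (ε := min (z L) (1 - z L))
        (lt_min htpos (by linarith)) ?_ L (by simp))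
      set d : Fin p → ℝ := fun j => if z j = z L then 1 else 0 with hd
      set ε := min (z L) (1 - z L) with hεdef
      have hε1 : ε ≤ z L := min_le_left _ _
      have hε2 : ε ≤ 1 - z L := min_le_right _ _
      have hdL : d L = 1 := if_pos rfl
      have hsd : ∑ i ∈ E, d i = (k : ℝ) := by
        rw [hd, ← Finset.sum_filter_add_sum_filter_not E (fun j => z j = z L)]
        have e1 : ∑ i ∈ E.filter (fun j => z j = z L),
            (if z i = z L then (1:ℝ) else 0) = (k : ℝ) := by
          rw [Finset.sum_congr rfl (fun i hi => if_pos (Finset.mem_filter.1 hi).2),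
            Finset.sum_const, nsmul_eq_mul, mul_one, hk, hT]
        have e2 : ∑ i ∈ E.filter (fun j => ¬ z j = z L),
            (if z i = z L then (1:ℝ) else 0) = 0 := by
          rw [Finset.sum_congr rfl (fun i hi => if_neg (Finset.mem_filter.1 hi).2),
            Finset.sum_const_zero]
        rw [e1, e2, add_zero]
      intro r hr1 hr2
      refine ⟨fun i => ?_, ?_, fun i hiL => ?_⟩
      · show z i + r * d i ∈ Set.Icc (0:ℝ) 1
        rw [Set.mem_Icc, hd]
        show 0 ≤ z i + r * (if z i = z L then 1 else 0) ∧
          z i + r * (if z i = z L then 1 else 0) ≤ 1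
        by_cases h1 : z i = z L
        · rw [if_pos h1, h1, mul_one]
          constructor <;> linarith
        · rw [if_neg h1, mul_zero, add_zero]
          exact ⟨(hIcc i).1, (hIcc i).2⟩
      · show 1 ≤ (∑ i ∈ E, (z i + r * d i)) - ((p:ℝ) - 2) * (z L + r * d L)
        rw [hsum, hsd, hdL, mul_one]
        nlinarith [mul_nonneg hc0 (show (0:ℝ) ≤ 1 - z L - r by linarith)]
      · show z L + r * d L ≤ z i + r * d i
        rw [hdL, mul_one, hd]
        show z L + r ≤ z i + r * (if z i = z L then 1 else 0)
        by_cases h1 : z i = z L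
        · rw [if_pos h1, h1, mul_one]
        · rw [if_neg h1, mul_zero, add_zero]
          have : z i = 1 := hval i (hmemE i hiL) h1
          linarith

private lemma st10_main {p : ℕ} (hp : 2 ≤ p) (L : Fin p) :
    convexHull ℝ
        ({z : Fin p → ℝ | (∀ i, z i = 0 ∨ z i = 1) ∧ ∀ i, i ≠ L → z L ≤ z i} \ {0}) =
      {z : Fin p → ℝ | (∀ i, z i ∈ Set.Icc (0 : ℝ) 1) ∧
        1 ≤ (∑ i ∈ Finset.univ.erase L, z i) - ((p : ℝ) - 2) * z L ∧
        ∀ i, i ≠ L → z L ≤ z i} := by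
  classical
  set Q : Set (Fin p → ℝ) :=
    {z : Fin p → ℝ | (∀ i, z i = 0 ∨ z i = 1) ∧ ∀ i, i ≠ L → z L ≤ z i} \ {0} with hQ
  set S : Set (Fin p → ℝ) :=
    {z : Fin p → ℝ | (∀ i, z i ∈ Set.Icc (0 : ℝ) 1) ∧
      1 ≤ (∑ i ∈ Finset.univ.erase L, z i) - ((p : ℝ) - 2) * z L ∧
      ∀ i, i ≠ L → z L ≤ z i} with hS
  set E := Finset.univ.erase L with hEdef
  have hEcard : E.card = p - 1 := by
    rw [hEdef, Finset.card_erase_of_mem (Finset.mem_univ L), Finset.card_univ, Fintype.card_fin]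
  have hEcardR : (E.card : ℝ) = (p : ℝ) - 1 := by
    rw [hEcard, Nat.cast_sub (by omega : 1 ≤ p), Nat.cast_one]
  have hQsubS : Q ⊆ S := by
    intro z hz
    obtain ⟨⟨hbin, hh⟩, hz0⟩ := hz
    refine ⟨fun i => ?_, ?_, hh⟩
    · rcases hbin i with h | h <;> rw [Set.mem_Icc, h] <;> norm_num
    · rcases hbin L with hL0 | hL1
      · obtain ⟨i, hi⟩ : ∃ i, z i ≠ 0 := by
          by_contra hcc
          push_neg at hcc
          exact hz0 (funext hcc)
        have hiL : i ≠ L := fun h => hi (by rw [h, hL0])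
        have hiE : i ∈ E := Finset.mem_erase.2 ⟨hiL, Finset.mem_univ i⟩
        have hi1 : z i = 1 := (hbin i).resolve_left hi
        have hsle : z i ≤ ∑ j ∈ E, z j := Finset.single_le_sum
          (fun j _ => by rcases hbin j with h | h <;> rw [h] <;> norm_num) hiE
        rw [hL0, mul_zero, sub_zero]
        linarith
      · have hall : ∀ i ∈ E, z i = 1 := by
          intro i hi
          refine (hbin i).resolve_left ?_
          have h2 := hh i (Finset.mem_erase.1 hi).1
          rw [hL1] at h2
          intro h0
          rw [h0] at h2
          linarith
        rw [Finset.sum_congr rfl hall, Finset.sum_const, nsmul_eq_mul, mul_one, hEcardR,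
          hL1, mul_one]
        linarith
  have hSconv : Convex ℝ S := by
    intro x hx y hy a b ha hb hab
    obtain ⟨hx1, hx2, hx3⟩ := hx
    obtain ⟨hy1, hy2, hy3⟩ := hy
    refine ⟨fun i => ?_, ?_, fun i hiL => ?_⟩
    · show a * x i + b * y i ∈ Set.Icc (0:ℝ) 1
      rw [Set.mem_Icc]
      have hxi := Set.mem_Icc.1 (hx1 i)
      have hyi := Set.mem_Icc.1 (hy1 i)
      constructor
      · exact add_nonneg (mul_nonneg ha hxi.1) (mul_nonneg hb hyi.1)
      · nlinarith [hxi.2, hyi.2]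
    · show 1 ≤ (∑ i ∈ E, (a * x i + b * y i)) - ((p:ℝ) - 2) * (a * x L + b * y L)
      have hsplit : (∑ i ∈ E, (a * x i + b * y i))
          = a * (∑ i ∈ E, x i) + b * (∑ i ∈ E, y i) := by
        rw [Finset.sum_add_distrib, ← Finset.mul_sum, ← Finset.mul_sum]
      rw [hsplit]
      nlinarith [mul_le_mul_of_nonneg_left hx2 ha, mul_le_mul_of_nonneg_left hy2 hb]
    · show a * x L + b * y L ≤ a * x i + b * y i
      exact add_le_add (mul_le_mul_of_nonneg_left (hx3 i hiL) ha)
        (mul_le_mul_of_nonneg_left (hy3 i hiL) hb)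
  have h1 : IsClosed {z : Fin p → ℝ | ∀ i, z i ∈ Set.Icc (0:ℝ) 1} := by
    rw [Set.setOf_forall]
    exact isClosed_iInter fun i => IsClosed.preimage (continuous_apply i) isClosed_Icc
  have h2 : IsClosed {z : Fin p → ℝ | 1 ≤ (∑ i ∈ E, z i) - ((p:ℝ)-2) * z L} :=
    isClosed_le continuous_const ((continuous_finset_sum E fun i _ => continuous_apply i).sub
      (continuous_const.mul (continuous_apply L)))
  have h3 : IsClosed {z : Fin p → ℝ | ∀ i, i ≠ L → z L ≤ z i} := by
    rw [Set.setOf_forall]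
    refine isClosed_iInter fun i => ?_
    by_cases hi : i = L
    · have : {z : Fin p → ℝ | i ≠ L → z L ≤ z i} = Set.univ := by
        ext z; simp [hi]
      rw [this]
      exact isClosed_univ
    · have : {z : Fin p → ℝ | i ≠ L → z L ≤ z i} = {z | z L ≤ z i} := by
        ext z; simp [hi]
      rw [this]
      exact isClosed_le (continuous_apply L) (continuous_apply i)
  have hSeq : S = {z : Fin p → ℝ | ∀ i, z i ∈ Set.Icc (0:ℝ) 1} ∩
      ({z : Fin p → ℝ | 1 ≤ (∑ i ∈ E, z i) - ((p:ℝ)-2) * z L} ∩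
        {z : Fin p → ℝ | ∀ i, i ≠ L → z L ≤ z i}) := rfl
  have hSclosed : IsClosed S := by
    rw [hSeq]
    exact h1.inter (h2.inter h3)
  have hScomp : IsCompact S := by
    refine IsCompact.of_isClosed_subset
      (isCompact_univ_pi (fun _ : Fin p => isCompact_Icc (a := (0:ℝ)) (b := 1))) hSclosed ?_
    intro z hz
    rw [Set.mem_univ_pi]
    exact fun i => hz.1 i
  have hQfin : Q.Finite := by
    have hbig : ({z : Fin p → ℝ | ∀ i, z i = 0 ∨ z i = 1}).Finite := by
      refine Set.Finite.subset (Set.Finite.pi (fun _ : Fin p =>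
        (Set.finite_singleton (1:ℝ)).insert 0)) ?_
      intro z hz
      rw [Set.mem_univ_pi]
      intro i
      rcases hz i with h | h <;> simp [h]
    exact hbig.subset (fun z hz => hz.1.1)
  have hext : Set.extremePoints ℝ S ⊆ Q := by
    intro z hzx
    have hbin : ∀ i, z i = 0 ∨ z i = 1 := st10_extreme_binary hp L hzx
    obtain ⟨hIcc, hg, hh⟩ := hzx.1
    refine ⟨⟨hbin, hh⟩, ?_⟩
    intro h0
    rw [Set.mem_singleton_iff] at h0
    rw [h0] at hg
    simp at hg
    linarith
  apply Set.Subset.antisymm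
  · exact convexHull_min hQsubS hSconv
  · calc S = closure (convexHull ℝ (Set.extremePoints ℝ S)) :=
        (closure_convexHull_extremePoints hScomp hSconv).symm
    _ ⊆ closure (convexHull ℝ Q) := closure_mono (convexHull_mono hext)
    _ = convexHull ℝ Q := (hQfin.isClosed_convexHull (𝕜 := ℝ)).closure_eq

/-- Lemma: the convex hull of `Q_sh \ {0}`, where
`Q_sh = {z ∈ {0,1}^p : z_p ≤ z_i ∀ i ∈ [p-1]}`, equals
`{z ∈ [0,1]^p : ∑_{i ∈ [p-1]} z_i - (p-2)·z_p ≥ 1, z_p ≤ z_i ∀ i ∈ [p-1]}`. -/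
theorem statement10 (p : ℕ) (hp : 2 ≤ p) :
    convexHull ℝ
        ({z : Fin p → ℝ | (∀ i, z i = 0 ∨ z i = 1) ∧
            ∀ i, i ≠ ⟨p - 1, by omega⟩ → z ⟨p - 1, by omega⟩ ≤ z i} \ {0}) =
      {z : Fin p → ℝ |
        (∀ i, z i ∈ Set.Icc (0 : ℝ) 1) ∧
        1 ≤ ∑ i ∈ Finset.univ.erase ⟨p - 1, by omega⟩, z i
              - ((p : ℝ) - 2) * z ⟨p - 1, by omega⟩ ∧
        ∀ i, i ≠ ⟨p - 1, by omega⟩ → z ⟨p - 1, by omega⟩ ≤ z i} :=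
  st10_main hp ⟨p - 1, by omega⟩
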